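/- For the transient Markov chain main theorem, the upper bound is attained by the normalized hitting measure: if τ is the first hitting time of Λ and ν(x) = P_ρ[X_τ = x], then the normalized measure ν/ν(Λ) has K-energy exactly 1/ν(Λ), i.e., I_K(ν/ν(Λ)) = ν(Λ)^{-1}, where K is the Martin kernel K(x,y) = G(x,y)/G(ρ,y). -/

import Mathlib

open MeasureTheory ENNReal
open scoped Classical
section Aux
variable {Y : Type*} [Countable Y] [MeasurableSpace Y] [MeasurableSingletonClass Y]

def MPath (Y : Type*) (n : ℕ) : Type _ := {f : ℕ → Y // ∀ i, n ≤ i → f i = f n}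

instance {n : ℕ} : Countable (MPath Y n) := by
  have h : Function.Injective (fun f : MPath Y n => (fun i : Fin (n+1) => f.1 i.1)) := by
    intro f g hfg
    apply Subtype.ext; funext i
    rcases le_or_gt i n with hi | hi
    · exact congrFun hfg ⟨i, by omega⟩
    · rw [f.2 i hi.le, g.2 i hi.le]
      exact congrFun hfg ⟨n, by omega⟩
  exact h.countable

noncomputable def Wt (p : Y → Y → ℝ≥0∞) (x : Y) (n : ℕ) (f : ℕ → Y) : ℝ≥0∞ :=
  (if f 0 = x then 1 else 0) * ∏ i ∈ Finset.range n, p (f i) (f (i + 1))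

def projP (n : ℕ) (ω : ℕ → Y) : MPath Y n :=
  ⟨fun i => ω (min i n), fun i hi => by simp [min_eq_right hi]⟩

def backP (k m : ℕ) (g : MPath Y (k + m)) : MPath Y m :=
  ⟨fun i => g.1 (k + min i m), fun i hi => by simp [min_eq_right hi]⟩

def glueP (k m : ℕ) (s : MPath Y k) (t : MPath Y m) : MPath Y (k + m) :=
  ⟨fun i => if i < k then s.1 i else t.1 (i - k), by
    intro i hi
    have h1 : ¬ i < k := by omega
    have h2 : ¬ k + m < k := by omega
    simp only [h1, h2, if_false]
    have e : k + m - k = m := by omega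
    have e2 : m ≤ i - k := by omega
    rw [e, t.2 (i - k) e2]⟩

noncomputable def splitEquiv (k m : ℕ) :
    MPath Y (k + m) ≃ {st : MPath Y k × MPath Y m // st.2.1 0 = st.1.1 k} where
  toFun g := ⟨(projP k g.1, backP k m g), by
    show g.1 (k + min 0 m) = g.1 (min k k)
    simp⟩
  invFun st := glueP k m st.1.1 st.1.2
  left_inv g := by
    apply Subtype.ext; funext i
    show (if i < k then g.1 (min i k) else g.1 (k + min (i - k) m)) = g.1 i
    rcases lt_or_ge i k with hi | hi
    · rw [if_pos hi, min_eq_left hi.le]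
    · rw [if_neg (not_lt.2 hi)]
      rcases le_or_gt i (k + m) with h2 | h2
      · have e1 : i - k ≤ m := by omega
        rw [min_eq_left e1, Nat.add_sub_cancel' hi]
      · have e1 : m ≤ i - k := by omega
        rw [min_eq_right e1, g.2 i (by omega)]
  right_inv := by
    rintro ⟨⟨s, t⟩, hst⟩
    simp only at hst
    apply Subtype.ext
    apply Prod.ext
    · apply Subtype.ext; funext i
      show (if min i k < k then s.1 (min i k) else t.1 (min i k - k)) = s.1 i
      rcases lt_or_ge i k with hi | hi
      · rw [min_eq_left hi.le, if_pos hi]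
      · rw [min_eq_right hi, if_neg (lt_irrefl k), Nat.sub_self]
        rw [hst, s.2 i hi]
    · apply Subtype.ext; funext i
      show (if k + min i m < k then s.1 (k + min i m) else t.1 (k + min i m - k)) = t.1 i
      rw [if_neg (by omega), Nat.add_sub_cancel_left]
      rcases le_or_gt i m with hi | hi
      · rw [min_eq_left hi]
      · rw [min_eq_right hi.le, t.2 i hi.le]

lemma wt_glue (p : Y → Y → ℝ≥0∞) (ρ x' : Y) (k m : ℕ) (g : MPath Y (k + m))
    (hxk : g.1 k = x') :
    Wt p ρ k (projP k g.1).1 * Wt p x' m (backP k m g).1 = Wt p ρ (k + m) g.1 := by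
  unfold Wt projP backP
  simp only
  have e0 : (min 0 k) = 0 := by simp
  have e0' : k + min 0 m = k := by simp
  have hprod1 : ∏ i ∈ Finset.range k, p (g.1 (min i k)) (g.1 (min (i+1) k))
      = ∏ i ∈ Finset.range k, p (g.1 i) (g.1 (i+1)) := by
    apply Finset.prod_congr rfl
    intro i hi
    rw [Finset.mem_range] at hi
    rw [min_eq_left hi.le, min_eq_left hi]
  have hprod2 : ∏ i ∈ Finset.range m, p (g.1 (k + min i m)) (g.1 (k + min (i+1) m))
      = ∏ i ∈ Finset.range m, p (g.1 (k + i)) (g.1 (k + i + 1)) := by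
    apply Finset.prod_congr rfl
    intro i hi
    rw [Finset.mem_range] at hi
    rw [min_eq_left hi.le, min_eq_left hi, Nat.add_succ]
  rw [hprod1, hprod2, Finset.prod_range_add]
  simp only [e0, e0', hxk, eq_self_iff_true, if_true]
  ring

lemma measA (p : Y → Y → ℝ≥0∞) (P : Y → Measure (ℕ → Y))
    (hcyl : ∀ (x : Y) (f : ℕ → Y) (n : ℕ),
      P x {ω | ∀ i ≤ n, ω i = f i} =
        (if f 0 = x then 1 else 0) * ∏ i ∈ Finset.range n, p (f i) (f (i + 1)))
    (x : Y) (n : ℕ) (S : Set (MPath Y n)) :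
    P x {ω | projP n ω ∈ S} = ∑' g : S, Wt p x n g.1.1 := by
  have hproj : ∀ (ω : ℕ → Y) (g : MPath Y n), (∀ i ≤ n, ω i = g.1 i) ↔ projP n ω = g := by
    intro ω g
    constructor
    · intro h
      apply Subtype.ext; funext i
      rcases le_or_gt i n with hi | hi
      · show ω (min i n) = g.1 i
        rw [min_eq_left hi]; exact h i hi
      · show ω (min i n) = g.1 i
        rw [min_eq_right hi.le, g.2 i hi.le]; exact h n le_rfl
    · intro h i hi
      rw [← h]
      show ω i = ω (min i n)
      rw [min_eq_left hi]
  have hset : {ω | projP n ω ∈ S} = ⋃ g : S, {ω : ℕ → Y | ∀ i ≤ n, ω i = g.1.1 i} := by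
    ext ω
    simp only [Set.mem_setOf_eq, Set.mem_iUnion]
    constructor
    · intro hω
      exact ⟨⟨projP n ω, hω⟩, fun i hi => ((hproj ω (projP n ω)).2 rfl) i hi⟩
    · rintro ⟨g, hg⟩
      rw [(hproj ω g.1).1 hg]
      exact g.2
  have hmeas : ∀ (c : ℕ → Y), MeasurableSet {ω : ℕ → Y | ∀ i ≤ n, ω i = c i} := by
    intro c
    have : {ω : ℕ → Y | ∀ i ≤ n, ω i = c i}
        = ⋂ i ∈ Set.Iic n, (fun ω : ℕ → Y => ω i) ⁻¹' {c i} := by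
      ext ω; simp [Set.mem_Iic]
    rw [this]
    exact MeasurableSet.biInter (Set.to_countable _)
      (fun i _ => (measurable_pi_apply i) (measurableSet_singleton _))
  have hdisj : Pairwise (Function.onFun Disjoint fun g : S => {ω : ℕ → Y | ∀ i ≤ n, ω i = g.1.1 i}) := by
    intro g g' hgg'
    rw [Function.onFun, Set.disjoint_left]
    intro ω h1 h2
    exact hgg' (Subtype.ext (((hproj ω g.1).1 h1).symm.trans ((hproj ω g'.1).1 h2)))
  rw [hset, measure_iUnion hdisj (fun g => hmeas _)]
  exact tsum_congr fun g => hcyl x g.1.1 n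


lemma mem_S1_iff (x' : Y) (Λ : Set Y) (k : ℕ) (f : ℕ → Y) :
    ((projP k f).1 k = x' ∧ ∀ j < k, (projP k f).1 j ∉ Λ) ↔ (f k = x' ∧ ∀ j < k, f j ∉ Λ) := by
  show ((f (min k k) = x' ∧ ∀ j < k, f (min j k) ∉ Λ) ↔ _)
  constructor
  · rintro ⟨h1, h2⟩
    refine ⟨by rwa [min_self] at h1, fun j hj => ?_⟩
    have := h2 j hj
    rwa [min_eq_left hj.le] at this
  · rintro ⟨h1, h2⟩
    exact ⟨by rwa [min_self], fun j hj => by rw [min_eq_left hj.le]; exact h2 j hj⟩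

lemma measSplit (p : Y → Y → ℝ≥0∞) (P : Y → Measure (ℕ → Y))
    (hcyl : ∀ (x : Y) (f : ℕ → Y) (n : ℕ),
      P x {ω | ∀ i ≤ n, ω i = f i} =
        (if f 0 = x then 1 else 0) * ∏ i ∈ Finset.range n, p (f i) (f (i + 1)))
    (ρ x' y : Y) (Λ : Set Y) (k m : ℕ) :
    P ρ {ω | ω k = x' ∧ (∀ j < k, ω j ∉ Λ) ∧ ω (k + m) = y}
      = P ρ {ω | ω k = x' ∧ ∀ j < k, ω j ∉ Λ} * P x' {ω | ω m = y} := by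
  classical
  set S1 : Set (MPath Y k) := {s | s.1 k = x' ∧ ∀ j < k, s.1 j ∉ Λ} with hS1
  set S2 : Set (MPath Y m) := {t | t.1 m = y} with hS2
  set S3 : Set (MPath Y (k + m)) :=
    {g | g.1 k = x' ∧ (∀ j < k, g.1 j ∉ Λ) ∧ g.1 (k + m) = y} with hS3
  have hm1 : ∀ f : ℕ → Y, projP k f ∈ S1 ↔ (f k = x' ∧ ∀ j < k, f j ∉ Λ) :=
    fun f => mem_S1_iff x' Λ k f
  have hm2 : ∀ g : MPath Y (k + m), backP k m g ∈ S2 ↔ g.1 (k + m) = y := by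
    intro g
    show g.1 (k + min m m) = y ↔ _
    rw [min_self]
  have hm3 : ∀ f : ℕ → Y, projP (k + m) f ∈ S3 ↔
      (f k = x' ∧ (∀ j < k, f j ∉ Λ) ∧ f (k + m) = y) := by
    intro f
    show (f (min k (k + m)) = x' ∧ (∀ j < k, f (min j (k + m)) ∉ Λ) ∧ f (min (k+m) (k+m)) = y) ↔ _
    rw [min_self, min_eq_left (by omega : k ≤ k + m)]
    constructor
    · rintro ⟨h1, h2, h3⟩
      refine ⟨h1, fun j hj => ?_, h3⟩
      have := h2 j hj
      rwa [min_eq_left (by omega)] at this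
    · rintro ⟨h1, h2, h3⟩
      exact ⟨h1, fun j hj => by rw [min_eq_left (by omega)]; exact h2 j hj, h3⟩
  have he1 : {ω : ℕ → Y | ω k = x' ∧ ∀ j < k, ω j ∉ Λ} = {ω | projP k ω ∈ S1} := by
    ext ω; exact (hm1 ω).symm
  have he2 : {ω : ℕ → Y | ω m = y} = {ω | projP m ω ∈ S2} := by
    ext ω
    show ω m = y ↔ ω (min m m) = y
    rw [min_self]
  have he3 : {ω : ℕ → Y | ω k = x' ∧ (∀ j < k, ω j ∉ Λ) ∧ ω (k + m) = y}
      = {ω | projP (k + m) ω ∈ S3} := by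
    ext ω; exact (hm3 ω).symm
  rw [he1, he2, he3, measA p P hcyl, measA p P hcyl, measA p P hcyl]
  set a : MPath Y k → ℝ≥0∞ := fun s => if s ∈ S1 then Wt p ρ k s.1 else 0 with ha
  set b : MPath Y m → ℝ≥0∞ := fun t => if t ∈ S2 then Wt p x' m t.1 else 0 with hb
  have hta : ∑' s : S1, Wt p ρ k s.1.1 = ∑' s, a s := by
    refine (tsum_subtype S1 (fun s : MPath Y k => Wt p ρ k s.1)).trans
      (tsum_congr fun s => ?_)
    simp [Set.indicator_apply, ha]
  have htb : ∑' t : S2, Wt p x' m t.1.1 = ∑' t, b t := by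
    refine (tsum_subtype S2 (fun t : MPath Y m => Wt p x' m t.1)).trans
      (tsum_congr fun t => ?_)
    simp [Set.indicator_apply, hb]
  have htc : ∑' g : S3, Wt p ρ (k + m) g.1.1
      = ∑' g : MPath Y (k + m), (if g ∈ S3 then Wt p ρ (k + m) g.1 else 0) := by
    refine (tsum_subtype S3 (fun g : MPath Y (k + m) => Wt p ρ (k + m) g.1)).trans
      (tsum_congr fun g => ?_)
    simp [Set.indicator_apply]
  rw [hta, htb, htc]
  rw [show (∑' s, a s) * (∑' t, b t) = ∑' st : MPath Y k × MPath Y m, a st.1 * b st.2 by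
    rw [ENNReal.tsum_prod (f := fun s t => a s * b t)]
    rw [← ENNReal.tsum_mul_right]
    exact tsum_congr fun s => ENNReal.tsum_mul_left.symm]
  set D : Set (MPath Y k × MPath Y m) := {st | st.2.1 0 = st.1.1 k} with hD
  have hsupp : Function.support (fun st : MPath Y k × MPath Y m => a st.1 * b st.2) ⊆ D := by
    intro st hst
    by_contra hstD
    apply hst
    show a st.1 * b st.2 = 0
    by_cases h1 : st.1 ∈ S1
    · have hne : st.2.1 0 ≠ x' := by
        intro h
        exact hstD (show st.2.1 0 = st.1.1 k by rw [h, h1.1])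
      have hb0 : b st.2 = 0 := by
        have hw : Wt p x' m st.2.1 = 0 := by
          unfold Wt
          rw [if_neg hne, zero_mul]
        rw [hb]
        simp only [hw, ite_self]
      rw [hb0, mul_zero]
    · have : a st.1 = 0 := by rw [ha]; simp only [if_neg h1]
      rw [this, zero_mul]
  have hkey : ∑' st : MPath Y k × MPath Y m, a st.1 * b st.2
      = ∑' g : MPath Y (k + m), (if g ∈ S3 then Wt p ρ (k + m) g.1 else 0) := by
    rw [← tsum_subtype_eq_of_support_subset hsupp]
    rw [← (((splitEquiv k m).trans
      (Equiv.subtypeEquivRight (fun st => Iff.rfl))) :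
        MPath Y (k + m) ≃ ↥D).tsum_eq (fun d : ↥D => a d.1.1 * b d.1.2)]
    apply tsum_congr
    intro g
    show a (projP k g.1) * b (backP k m g) = _
    by_cases hg : g ∈ S3
    · have h1 : projP k g.1 ∈ S1 := (hm1 g.1).2 ⟨hg.1, hg.2.1⟩
      have h2 : backP k m g ∈ S2 := (hm2 g).2 hg.2.2
      rw [ha, hb]
      simp only [if_pos h1, if_pos h2, if_pos hg]
      exact wt_glue p ρ x' k m g hg.1
    · rw [if_neg hg]
      by_cases h1 : projP k g.1 ∈ S1
      · have h2 : backP k m g ∉ S2 := by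
          intro h2
          exact hg ⟨((hm1 g.1).1 h1).1, ((hm1 g.1).1 h1).2, (hm2 g).1 h2⟩
        rw [hb]
        simp only [if_neg h2, mul_zero]
      · rw [ha]
        simp only [if_neg h1, zero_mul]
  rw [← hkey]

end Aux

/-- The normalized hitting measure `ν/ν(Λ)` of `Λ` has Martin-kernel energy
exactly `ν(Λ)⁻¹`, where `ν(x) = P_ρ[X_τ = x]` for the first hitting time `τ` of `Λ`
and `K(x,y) = G(x,y)/G(ρ,y)`. -/
theorem stmt19
    (Y : Type*) [Countable Y] [MeasurableSpace Y] [MeasurableSingletonClass Y]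
    (p : Y → Y → ℝ≥0∞) (hp : ∀ x, ∑' y, p x y = 1)
    (P : Y → Measure (ℕ → Y)) (hprob : ∀ x, IsProbabilityMeasure (P x))
    (hcyl : ∀ (x : Y) (f : ℕ → Y) (n : ℕ),
      P x {ω | ∀ i ≤ n, ω i = f i} =
        (if f 0 = x then 1 else 0) * ∏ i ∈ Finset.range n, p (f i) (f (i + 1)))
    (ρ : Y)
    (G : Y → Y → ℝ≥0∞) (hGdef : ∀ x y, G x y = ∑' n : ℕ, P x {ω | ω n = y})
    (hGfin : ∀ x y, G x y < ∞)
    (K : Y → Y → ℝ≥0∞) (hK : ∀ x y, K x y = G x y / G ρ y)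
    (Λ : Set Y)
    (ν : Y → ℝ≥0∞)
    -- `ν x` is the probability that the first entrance of the chain to `Λ` occurs at `x`
    (hν : ∀ x ∈ Λ, ν x = P ρ {ω | ∃ n, ω n = x ∧ ∀ m < n, ω m ∉ Λ})
    (νΛ : ℝ≥0∞) (hνΛ : νΛ = ∑' x : Λ, ν x) (hpos : 0 < νΛ) :
    ∑' x : Λ, ∑' y : Λ, K x y * (ν x / νΛ) * (ν y / νΛ) = νΛ⁻¹ := by
  classical
  haveI := hprob ρ
  have measY : ∀ s : Set Y, MeasurableSet s := fun s => (Set.to_countable s).measurableSet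
  have mevalmem : ∀ (j : ℕ) (s : Set Y), MeasurableSet {ω : ℕ → Y | ω j ∈ s} :=
    fun j s => (measurable_pi_apply j) (measY s)
  -- the first-entrance-at-time-k events
  set E : ℕ → Y → Set (ℕ → Y) := fun k x' => {ω | ω k = x' ∧ ∀ j < k, ω j ∉ Λ} with hE
  have mE : ∀ k x', MeasurableSet (E k x') := by
    intro k x'
    have : E k x' = {ω : ℕ → Y | ω k ∈ ({x'} : Set Y)} ∩
        ⋂ j ∈ Set.Iio k, {ω : ℕ → Y | ω j ∈ Λᶜ} := by
      ext ω; simp [hE, Set.mem_Iio]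
    rw [this]
    exact (mevalmem _ _).inter
      (MeasurableSet.biInter (Set.to_countable _) fun j _ => mevalmem _ _)
  -- hitting events
  set H : Y → Set (ℕ → Y) := fun x => {ω | ∃ n, ω n = x ∧ ∀ m < n, ω m ∉ Λ} with hH
  have hHE : ∀ x, H x = ⋃ k, E k x := by
    intro x; ext ω; simp [hH, hE]
  have mH : ∀ x, MeasurableSet (H x) := fun x =>
    (hHE x) ▸ MeasurableSet.iUnion fun k => mE k x
  have hEdisj : ∀ x' ∈ Λ, Pairwise (Function.onFun Disjoint fun k => E k x') := by
    intro x' hx' k k' hkk'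
    have key : ∀ k k' : ℕ, k < k' → Disjoint (E k x') (E k' x') := by
      intro k k' h
      rw [Set.disjoint_left]
      rintro ω ⟨h1, _⟩ ⟨_, h2⟩
      exact h2 k h (h1 ▸ hx')
    rcases hkk'.lt_or_gt with h | h
    · exact key _ _ h
    · exact (key _ _ h).symm
  have step1 : ∀ x' ∈ Λ, ν x' = ∑' k : ℕ, P ρ (E k x') := by
    intro x' hx'
    rw [hν x' hx',
      show {ω : ℕ → Y | ∃ n, ω n = x' ∧ ∀ m < n, ω m ∉ Λ} = ⋃ k, E k x' from hHE x']
    exact measure_iUnion (hEdisj x' hx') (fun k => mE k x')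
  -- νΛ is finite
  have hHdisj : Pairwise (Function.onFun Disjoint fun x : ↥Λ => H x.1) := by
    intro x x' hxx'
    rw [Function.onFun, Set.disjoint_left]
    rintro ω ⟨n, h1, h2⟩ ⟨n', h1', h2'⟩
    apply hxx'
    have hnn : n = n' := by
      by_contra hne
      rcases Nat.lt_or_ge n n' with h | h
      · exact h2' n h (h1 ▸ x.2)
      · exact h2 n' (lt_of_le_of_ne h fun e => hne e.symm) (h1' ▸ x'.2)
    exact Subtype.ext (h1.symm.trans (hnn ▸ h1'))
  have hνΛle : νΛ ≤ 1 := by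
    rw [hνΛ]
    calc ∑' x : Λ, ν x.1 = ∑' x : Λ, P ρ (H x.1) := tsum_congr fun x => hν x.1 x.2
      _ = P ρ (⋃ x : Λ, H x.1) := (measure_iUnion hHdisj fun x => mH x.1).symm
      _ ≤ 1 := prob_le_one
  have hνΛtop : νΛ ≠ ⊤ := (lt_of_le_of_lt hνΛle one_lt_top).ne
  -- ν y ≤ G ρ y
  have step4 : ∀ y ∈ Λ, ν y ≤ G ρ y := by
    intro y hy
    rw [hν y hy, hGdef]
    calc P ρ {ω | ∃ n, ω n = y ∧ ∀ m < n, ω m ∉ Λ}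
        ≤ P ρ (⋃ n, {ω : ℕ → Y | ω n = y}) := by
          apply measure_mono
          rintro ω ⟨n, h1, _⟩
          exact Set.mem_iUnion.2 ⟨n, h1⟩
      _ ≤ ∑' n, P ρ {ω : ℕ → Y | ω n = y} := measure_iUnion_le _
  -- first entrance decomposition
  have step2 : ∀ y ∈ Λ, ∑' x : Λ, G x.1 y * ν x.1 = G ρ y := by
    intro y hy
    set E3 : ℕ → Y → ℕ → Set (ℕ → Y) :=
      fun k x' n => {ω | ω k = x' ∧ (∀ j < k, ω j ∉ Λ) ∧ ω n = y} with hE3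
    have mE3 : ∀ k x' n, MeasurableSet (E3 k x' n) := by
      intro k x' n
      have : E3 k x' n = {ω : ℕ → Y | ω k ∈ ({x'} : Set Y)} ∩
          ((⋂ j ∈ Set.Iio k, {ω : ℕ → Y | ω j ∈ Λᶜ}) ∩
            {ω : ℕ → Y | ω n ∈ ({y} : Set Y)}) := by
        ext ω; simp [hE3, Set.mem_Iio, and_assoc]
      rw [this]
      exact (mevalmem _ _).inter
        (((MeasurableSet.biInter (Set.to_countable _) fun j _ => mevalmem _ _)).inter
          (mevalmem _ _))
    have hdec : ∀ n, {ω : ℕ → Y | ω n = y} = ⋃ q : ℕ × ↥Λ, E3 q.1 q.2.1 n := by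
      intro n
      ext ω
      constructor
      · intro hω
        have hωn : ω n = y := hω
        have hex : ∃ k, ω k ∈ Λ := ⟨n, by rw [hωn]; exact hy⟩
        exact Set.mem_iUnion.2 ⟨(Nat.find hex, ⟨ω (Nat.find hex), Nat.find_spec hex⟩),
          ⟨rfl, fun j hj => Nat.find_min hex hj, hωn⟩⟩
      · intro hω
        obtain ⟨q, hq⟩ := Set.mem_iUnion.1 hω
        exact hq.2.2
    have hdisj3 : ∀ n, Pairwise (Function.onFun Disjoint fun q : ℕ × ↥Λ => E3 q.1 q.2.1 n) := by
      intro n q q' hne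
      rw [Function.onFun, Set.disjoint_left]
      rintro ω ⟨h1a, h1b, _⟩ ⟨h2a, h2b, _⟩
      apply hne
      have hk : q.1 = q'.1 := by
        by_contra hkk
        rcases Nat.lt_or_ge q.1 q'.1 with h | h
        · exact h2b q.1 h (by rw [h1a]; exact q.2.2)
        · exact h1b q'.1 (lt_of_le_of_ne h fun e => hkk e.symm) (by rw [h2a]; exact q'.2.2)
      exact Prod.ext hk (Subtype.ext (by rw [← h1a, ← h2a, hk]))
    have hempty : ∀ k x' n, n < k → E3 k x' n = ∅ := by
      intro k x' n hn
      ext ω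
      simp only [hE3, Set.mem_setOf_eq, Set.mem_empty_iff_false, iff_false]
      rintro ⟨_, h2, h3⟩
      exact h2 n hn (h3 ▸ hy)
    have hsplit : ∀ (k : ℕ) (x' : Y) (m : ℕ),
        P ρ (E3 k x' (k + m)) = P ρ (E k x') * P x' {ω | ω m = y} :=
      fun k x' m => measSplit p P hcyl ρ x' y Λ k m
    have hGy : G ρ y = ∑' n, ∑' q : ℕ × ↥Λ, P ρ (E3 q.1 q.2.1 n) := by
      rw [hGdef]
      exact tsum_congr fun n => by
        rw [hdec n]; exact measure_iUnion (hdisj3 n) (fun q => mE3 _ _ _)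
    rw [hGy, ENNReal.tsum_comm,
      ENNReal.tsum_prod (f := fun k (x' : ↥Λ) => ∑' n, P ρ (E3 k x'.1 n)),
      ENNReal.tsum_comm]
    apply tsum_congr
    intro x
    have hinner : ∀ k, ∑' n, P ρ (E3 k x.1 n) = P ρ (E k x.1) * G x.1 y := by
      intro k
      have hms : ∑' m, P ρ (E3 k x.1 (k + m)) = ∑' n, P ρ (E3 k x.1 n) := by
        refine Function.Injective.tsum_eq (g := fun m => k + m)
          (f := fun n => P ρ (E3 k x.1 n)) (fun m1 m2 h => Nat.add_left_cancel h) ?_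
        intro n hn
        rw [Function.mem_support] at hn
        by_contra hr
        apply hn
        have hnk : n < k := by
          by_contra h
          exact hr ⟨n - k, show k + (n - k) = n by omega⟩
        rw [hempty k x.1 n hnk]
        simp
      rw [← hms]
      calc ∑' m, P ρ (E3 k x.1 (k + m))
          = ∑' m, P ρ (E k x.1) * P x.1 {ω | ω m = y} := tsum_congr fun m => hsplit k x.1 m
        _ = P ρ (E k x.1) * ∑' m, P x.1 {ω : ℕ → Y | ω m = y} := ENNReal.tsum_mul_left
        _ = P ρ (E k x.1) * G x.1 y := by rw [hGdef]
    rw [tsum_congr hinner, ENNReal.tsum_mul_right, ← step1 x.1 x.2, mul_comm]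
  -- final computation
  rw [ENNReal.tsum_comm]
  have hterm : ∀ y : ↥Λ, ∑' x : ↥Λ, K x.1 y.1 * (ν x.1 / νΛ) * (ν y.1 / νΛ)
      = ν y.1 / νΛ * νΛ⁻¹ := by
    intro y
    by_cases hy0 : ν y.1 = 0
    · simp [hy0, ENNReal.zero_div]
    · have hGne : G ρ y.1 ≠ 0 := by
        intro h
        exact hy0 (le_antisymm (by rw [← h]; exact step4 y.1 y.2) zero_le)
      have hGtop : G ρ y.1 ≠ ⊤ := (hGfin ρ y.1).ne
      calc ∑' x : ↥Λ, K x.1 y.1 * (ν x.1 / νΛ) * (ν y.1 / νΛ)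
          = ∑' x : ↥Λ, (G x.1 y.1 * ν x.1) * ((G ρ y.1)⁻¹ * (νΛ⁻¹ * (ν y.1 / νΛ))) := by
            apply tsum_congr
            intro x
            rw [hK, div_eq_mul_inv, div_eq_mul_inv, div_eq_mul_inv]
            ring
        _ = (∑' x : ↥Λ, G x.1 y.1 * ν x.1) * ((G ρ y.1)⁻¹ * (νΛ⁻¹ * (ν y.1 / νΛ))) :=
            ENNReal.tsum_mul_right
        _ = G ρ y.1 * ((G ρ y.1)⁻¹ * (νΛ⁻¹ * (ν y.1 / νΛ))) := by rw [step2 y.1 y.2]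
        _ = ν y.1 / νΛ * νΛ⁻¹ := by
            rw [← mul_assoc, ENNReal.mul_inv_cancel hGne hGtop, one_mul]
            ring
  rw [tsum_congr hterm, ENNReal.tsum_mul_right]
  have hone : ∑' y : ↥Λ, ν y.1 / νΛ = 1 := by
    calc ∑' y : ↥Λ, ν y.1 / νΛ = (∑' y : ↥Λ, ν y.1) * νΛ⁻¹ := by
          rw [← ENNReal.tsum_mul_right]
          exact tsum_congr fun y => div_eq_mul_inv _ _
      _ = νΛ * νΛ⁻¹ := by rw [← hνΛ]
      _ = 1 := ENNReal.mul_inv_cancel hpos.ne' hνΛtop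
  rw [hone, one_mul]
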